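/- Let F be an L(H)-valued POVM on a measure space, T(f) = ∫ f dF the induced quantization map, and for a state θ ∈ S(H) let μ_θ be the Husimi measure defined by ∫ f dμ_θ = tr(T(f)θ). Then for every bounded real measurable f: Var(f, μ_θ) = Var(T(f), θ) + tr(Δ(f)θ), where Var(f,μ_θ) = ∫f²dμ_θ − (∫f dμ_θ)², Var(T(f),θ) = tr(T(f)²θ) − (tr(T(f)θ))², and Δ(f) = T(f²) − T(f)². In particular, since Δ(f) ≥ 0, the classical variance Var(f,μ_θ) is at least the quantum variance Var(T(f),θ). -/

import Mathlib

open ContinuousLinearMap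

section Helpers
variable {H : Type*} [NormedAddCommGroup H] [InnerProductSpace ℂ H] [FiniteDimensional ℂ H]

omit [FiniteDimensional ℂ H] in
lemma trace_onb' {ι : Type*} [Fintype ι] [DecidableEq ι] (b : OrthonormalBasis ι ℂ H)
    (g : H →ₗ[ℂ] H) :
    LinearMap.trace ℂ H g = ∑ i, (inner ℂ (b i) (g (b i)) : ℂ) := by
  rw [LinearMap.trace_eq_matrix_trace ℂ b.toBasis, Matrix.trace]
  congr 1
  ext i
  rw [Matrix.diag_apply, LinearMap.toMatrix_apply, OrthonormalBasis.coe_toBasis,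
    ← b.repr_apply_apply]
  rfl

lemma trace_mul_pos_re {Δ θ : H →L[ℂ] H} (hΔ : Δ.IsPositive) (hθ : θ.IsPositive) :
    0 ≤ (LinearMap.trace ℂ H ((Δ * θ : H →L[ℂ] H) : H →ₗ[ℂ] H)).re := by
  have hsym : (θ : H →ₗ[ℂ] H).IsSymmetric :=
    hθ.1
  have hrank : Module.finrank ℂ H = Module.finrank ℂ H := rfl
  set b := hsym.eigenvectorBasis hrank with hb
  set μ := hsym.eigenvalues hrank with hμ
  have happ : ∀ i, θ (b i) = (μ i : ℂ) • b i := fun i => hsym.apply_eigenvectorBasis hrank i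
  rw [trace_onb' b]
  have hterm : ∀ i, (inner ℂ (b i) (((Δ * θ : H →L[ℂ] H) : H →ₗ[ℂ] H) (b i)) : ℂ) =
      (μ i : ℂ) * inner ℂ (b i) (Δ (b i)) := by
    intro i
    have : ((Δ * θ : H →L[ℂ] H) : H →ₗ[ℂ] H) (b i) = Δ (θ (b i)) := rfl
    rw [this, happ i, map_smul, inner_smul_right]
  simp_rw [hterm]
  rw [Complex.re_sum]
  apply Finset.sum_nonneg
  intro i _
  have h1 : 0 ≤ μ i := by
    have h := hθ.2 (b i)
    have hn : ‖b i‖ = 1 := b.orthonormal.1 i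
    rw [reApplyInnerSelf_apply, happ i, inner_smul_left, Complex.conj_ofReal] at h
    simpa [inner_self_eq_norm_sq_to_K, hn] using h
  have h2 : 0 ≤ (inner ℂ (b i) (Δ (b i)) : ℂ).re := by
    have h := hΔ.2 (b i)
    rw [reApplyInnerSelf_apply] at h
    rwa [← inner_conj_symm, Complex.conj_re]
  have : ((μ i : ℂ) * inner ℂ (b i) (Δ (b i))).re
      = μ i * (inner ℂ (b i) (Δ (b i)) : ℂ).re := by
    simp [Complex.mul_re]
  rw [this]
  exact mul_nonneg h1 h2

end Helpers

lemma husimi_delta_pos'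
    {H' : Type*} [NormedAddCommGroup H'] [InnerProductSpace ℂ H'] [CompleteSpace H']
    {H : Type*} [NormedAddCommGroup H] [InnerProductSpace ℂ H] [FiniteDimensional ℂ H]
    (Pr : H' →L[ℂ] H) (hPr : Pr ∘L adjoint Pr = 1)
    (S : H' →L[ℂ] H') (hS : IsSelfAdjoint S)
    (Tf Tf2 : H →L[ℂ] H)
    (hTf : Tf = Pr ∘L S ∘L adjoint Pr)
    (hTf2 : Tf2 = Pr ∘L (S ^ 2) ∘L adjoint Pr) :
    (Tf2 - Tf ^ 2).IsPositive := by
  have hS' : adjoint S = S := isSelfAdjoint_iff'.mp hS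
  set P : H' →L[ℂ] H' := adjoint Pr ∘L Pr with hP
  have hPsa : adjoint P = P := by
    rw [hP, adjoint_comp, adjoint_adjoint]
  have hPr' : ∀ x, Pr (adjoint Pr x) = x := by
    intro x
    have := DFunLike.congr_fun hPr x
    simpa using this
  have hPidem : P ∘L P = P := by
    ext x
    simp [hP, hPr']
  have hQsa : IsSelfAdjoint (1 - P) :=
    (IsSelfAdjoint.one (H' →L[ℂ] H')).sub (isSelfAdjoint_iff'.mpr hPsa)
  have hQadj : adjoint (1 - P) = 1 - P := isSelfAdjoint_iff'.mp hQsa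
  have hQpos : (1 - P).IsPositive := by
    refine ⟨(isSelfAdjoint_iff_isSymmetric).mp hQsa, fun x => ?_⟩
    have hQidem : (1 - P) ∘L (1 - P) = 1 - P := by
      simp only [comp_sub, sub_comp, one_def, id_comp, comp_id, hPidem]
      abel
    have h1 : (1 - P) x = (1 - P) ((1 - P) x) := by
      conv_lhs => rw [← hQidem]
      rfl
    have h2 := adjoint_inner_left (1 - P) x ((1 - P) x)
    rw [hQadj] at h2
    rw [reApplyInnerSelf_apply]
    conv_rhs => rw [h1]
    rw [h2]
    exact inner_self_nonneg
  have hadj : adjoint (Pr ∘L S) = S ∘L adjoint Pr := by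
    rw [adjoint_comp, hS']
  have key : Tf2 - Tf ^ 2 = (Pr ∘L S) ∘L (1 - P) ∘L adjoint (Pr ∘L S) := by
    rw [hadj, hTf, hTf2, pow_two, pow_two, mul_def]
    simp only [comp_sub, sub_comp, one_def, id_comp, comp_id, hP]
    simp only [comp_assoc, mul_def]
  rw [key]
  exact hQpos.conj_adjoint (Pr ∘L S)

/-- Let `T` be the quantization induced by a POVM (presented via its Naimark
dilation: `T(f) = Π S Π*`, `T(f²) = Π S² Π*` with `Π Π* = 1` and `S` self-adjoint), let `θ`
be a state and `μ_θ` the Husimi measure, defined by `∫ h dμ_θ = tr(T(h)θ)`. Then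
`Var(f, μ_θ) = Var(T(f), θ) + tr(Δ(f)θ)` with `Δ(f) = T(f²) − T(f)²`; in particular, since
`Δ(f) ≥ 0`, the classical variance dominates the quantum variance. -/
theorem husimi_variance_identity
    {H' : Type*} [NormedAddCommGroup H'] [InnerProductSpace ℂ H'] [CompleteSpace H']
    {H : Type*} [NormedAddCommGroup H] [InnerProductSpace ℂ H] [FiniteDimensional ℂ H]
    (Pr : H' →L[ℂ] H) (hPr : Pr ∘L adjoint Pr = 1)
    (S : H' →L[ℂ] H') (hS : IsSelfAdjoint S)
    (Tf Tf2 : H →L[ℂ] H)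
    (hTf : Tf = Pr ∘L S ∘L adjoint Pr)
    (hTf2 : Tf2 = Pr ∘L (S ^ 2) ∘L adjoint Pr)
    (θ : H →L[ℂ] H) (hθ : θ.IsPositive)
    (hθ1 : LinearMap.trace ℂ H (θ : H →ₗ[ℂ] H) = 1)
    {M : Type*} [MeasurableSpace M] (μθ : MeasureTheory.Measure M)
    [MeasureTheory.IsProbabilityMeasure μθ]
    (f : M → ℝ) (hf_meas : Measurable f) (hf_bdd : ∃ C, ∀ x, |f x| ≤ C)
    (h1 : ∫ x, f x ∂μθ = (LinearMap.trace ℂ H ((Tf * θ : H →L[ℂ] H) : H →ₗ[ℂ] H)).re)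
    (h2 : ∫ x, (f x) ^ 2 ∂μθ =
      (LinearMap.trace ℂ H ((Tf2 * θ : H →L[ℂ] H) : H →ₗ[ℂ] H)).re) :
    ((∫ x, (f x) ^ 2 ∂μθ) - (∫ x, f x ∂μθ) ^ 2 =
        ((LinearMap.trace ℂ H ((Tf ^ 2 * θ : H →L[ℂ] H) : H →ₗ[ℂ] H)).re -
          ((LinearMap.trace ℂ H ((Tf * θ : H →L[ℂ] H) : H →ₗ[ℂ] H)).re) ^ 2) +
        (LinearMap.trace ℂ H (((Tf2 - Tf ^ 2) * θ : H →L[ℂ] H) : H →ₗ[ℂ] H)).re) ∧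
    ((LinearMap.trace ℂ H ((Tf ^ 2 * θ : H →L[ℂ] H) : H →ₗ[ℂ] H)).re -
        ((LinearMap.trace ℂ H ((Tf * θ : H →L[ℂ] H) : H →ₗ[ℂ] H)).re) ^ 2 ≤
      (∫ x, (f x) ^ 2 ∂μθ) - (∫ x, f x ∂μθ) ^ 2) := by
  have hΔ : (Tf2 - Tf ^ 2).IsPositive :=
    husimi_delta_pos' Pr hPr S hS Tf Tf2 hTf hTf2
  have hsplit : ((Tf2 - Tf ^ 2) * θ : H →L[ℂ] H) = Tf2 * θ - Tf ^ 2 * θ := sub_mul _ _ _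
  have htr : (LinearMap.trace ℂ H (((Tf2 - Tf ^ 2) * θ : H →L[ℂ] H) : H →ₗ[ℂ] H)).re
      = (LinearMap.trace ℂ H ((Tf2 * θ : H →L[ℂ] H) : H →ₗ[ℂ] H)).re
        - (LinearMap.trace ℂ H ((Tf ^ 2 * θ : H →L[ℂ] H) : H →ₗ[ℂ] H)).re := by
    rw [hsplit, ContinuousLinearMap.coe_sub, map_sub, Complex.sub_re]
  have hpos : 0 ≤ (LinearMap.trace ℂ H (((Tf2 - Tf ^ 2) * θ : H →L[ℂ] H) : H →ₗ[ℂ] H)).re :=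
    trace_mul_pos_re hΔ hθ
  constructor
  · rw [h1, h2, htr]; ring
  · rw [h1, h2]; nlinarith [htr ▸ hpos]
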